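/- Let f(z) = Σ aₙ zⁿ be a power series with nonnegative real coefficients and radius of convergence R ∈ (0, ∞]. Suppose f extends to a function of the form a₀/(z − z*) + h(z) with h analytic on a disc of radius > z* around z* and a₀ ≠ 0, and z* < R' with f analytic on {|z| ≤ z*} \ {z*}. Then aₙ ∼ A·(1/z*)ⁿ for the constant A = −a₀/z* (in particular aₙ·z*ⁿ converges to a nonzero constant). -/

import Mathlib

open Filter Topology FormalMultilinearSeries

/-- Singularity analysis transfer: let `f(z) = Σ aₙ zⁿ` be a power series with nonnegative
real coefficients which extends to `a₀/(z − z*) + h(z)` with `a₀ ≠ 0` and `h` analytic on a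
disc of radius `R' > z*` around the origin. Then `aₙ ∼ A·(1/z*)ⁿ` with `A = −a₀/z*`;
in particular `aₙ·z*ⁿ` converges to the nonzero constant `A`. -/
theorem singularity_analysis_transfer (a : ℕ → ℝ) (zs : ℝ) (hzs : 0 < zs)
    (c : ℝ) (hc : c ≠ 0) (h : ℂ → ℂ) (R' : ℝ) (hR' : zs < R')
    (hh : AnalyticOn ℂ h (Metric.ball 0 R'))
    (ha : ∀ n, 0 ≤ a n)
    (hrep : ∀ z : ℂ, ‖z‖ < zs →
      HasSum (fun n : ℕ => (a n : ℂ) * z ^ n) ((c : ℂ) / (z - (zs : ℂ)) + h z)) :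
    Tendsto (fun n : ℕ => a n * zs ^ n) atTop (𝓝 (-c / zs)) ∧ -c / zs ≠ 0 := by
  have hzs' : (zs : ℂ) ≠ 0 := by exact_mod_cast hzs.ne'
  -- power series of h on a closed ball of radius r with zs < r < R'
  set r : ℝ := (zs + R') / 2 with hr
  have hr0 : 0 < r := by rw [hr]; linarith
  have hzsr : zs < r := by rw [hr]; linarith
  have hrR' : r < R' := by rw [hr]; linarith
  set rn : NNReal := ⟨r, hr0.le⟩ with hrn
  have hdiff : DifferentiableOn ℂ h (Metric.closedBall (0:ℂ) rn) := by
    apply (hh.differentiableOn).mono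
    intro x hx
    simp only [Metric.mem_closedBall, Metric.mem_ball] at hx ⊢
    calc dist x 0 ≤ (rn : ℝ) := hx
    _ < R' := hrR'
  have hp : HasFPowerSeriesOnBall h (cauchyPowerSeries h 0 rn) 0 rn :=
    hdiff.hasFPowerSeriesOnBall (by exact_mod_cast hr0)
  set p : FormalMultilinearSeries ℂ ℂ ℂ := cauchyPowerSeries h 0 rn
  -- hasSum for p at any y with ‖y‖ < r
  have hpsum : ∀ y : ℂ, ‖y‖ < r → HasSum (fun n => p.coeff n * y ^ n) (h y) := by
    intro y hy
    have hmem : y ∈ Metric.eball (0:ℂ) (rn : ENNReal) := by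
      rw [EMetric.mem_ball, edist_zero_right]
      exact_mod_cast (show ‖y‖₊ < rn from by exact_mod_cast hy)
    have := hp.hasSum hmem
    simpa [apply_eq_pow_smul_coeff, smul_eq_mul, mul_comm] using this
  -- the two formal series
  set q : ℕ → ℂ := fun n => -((c:ℂ)/zs) * ((zs:ℂ)⁻¹) ^ n + p.coeff n with hq
  set g : ℂ → ℂ := fun z => (c : ℂ) / (z - (zs : ℂ)) + h z with hg
  have key : ∀ z : ℂ, ‖z‖ < zs → HasSum (fun n => q n * z ^ n) (g z) := by
    intro z hz
    have h1 : ‖z / (zs:ℂ)‖ < 1 := by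
      rw [norm_div, Complex.norm_real, Real.norm_of_nonneg hzs.le, div_lt_one hzs]
      exact hz
    have hgeo := (hasSum_geometric_of_norm_lt_one h1).mul_left (-((c:ℂ)/zs))
    have hne : z - (zs:ℂ) ≠ 0 := by
      intro h0
      rw [sub_eq_zero] at h0
      rw [h0, Complex.norm_real, Real.norm_of_nonneg hzs.le] at hz
      exact lt_irrefl _ hz
    have hzsz : (zs:ℂ) - z ≠ 0 := fun h0 => hne (by linear_combination -h0)
    have h3 : (1 - z/(zs:ℂ))⁻¹ = zs/((zs:ℂ) - z) := by
      rw [show (1:ℂ) - z/(zs:ℂ) = ((zs:ℂ) - z)/zs by field_simp, inv_div]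
    have heq : -((c:ℂ)/zs) * (1 - z/(zs:ℂ))⁻¹ = (c:ℂ) / (z - (zs:ℂ)) := by
      rw [h3]
      field_simp
      ring
    rw [heq] at hgeo
    have hterm : (fun n => -((c:ℂ)/zs) * (z/(zs:ℂ))^n) =
        fun n => (-((c:ℂ)/zs) * ((zs:ℂ)⁻¹)^n) * z^n := by
      funext n
      rw [div_pow, inv_pow]
      ring
    rw [hterm] at hgeo
    have := hgeo.add (hpsum z (hz.trans hzsr))
    convert this using 2 with n
    · rfl
    simp only [hq]
    ring
  -- both series represent g at 0
  have hcoeff : ∀ (f : ℕ → ℂ) (n : ℕ), (ofScalars ℂ f).coeff n = f n := by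
    intro f n
    simp [FormalMultilinearSeries.coeff, ofScalars, Pi.one_def]
  have hA : HasFPowerSeriesAt g (ofScalars ℂ (fun n => (a n : ℂ))) 0 := by
    rw [hasFPowerSeriesAt_iff]
    filter_upwards [Metric.ball_mem_nhds (0:ℂ) hzs] with z hz
    rw [zero_add]
    convert hrep z (by simpa using hz) using 1
    · rfl
    funext n
    rw [hcoeff, smul_eq_mul, mul_comm]
  have hB : HasFPowerSeriesAt g (ofScalars ℂ q) 0 := by
    rw [hasFPowerSeriesAt_iff]
    filter_upwards [Metric.ball_mem_nhds (0:ℂ) hzs] with z hz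
    rw [zero_add]
    convert key z (by simpa using hz) using 1
    · rfl
    funext n
    rw [hcoeff, smul_eq_mul, mul_comm]
  have hqa : ∀ n, (a n : ℂ) = q n := by
    have := hA.eq_formalMultilinearSeries hB
    rw [ofScalars_series_eq_iff] at this
    exact fun n => congrFun this n
  -- now compute
  have hzc : ∀ n, (a n : ℂ) * (zs:ℂ)^n = -((c:ℂ)/zs) + p.coeff n * (zs:ℂ)^n := by
    intro n
    rw [hqa n]
    simp only [hq]
    rw [add_mul, mul_assoc, ← mul_pow, inv_mul_cancel₀ hzs', one_pow, mul_one]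
  have htend0 : Tendsto (fun n => p.coeff n * (zs:ℂ)^n) atTop (𝓝 0) := by
    have := (hpsum (zs:ℂ) (by
      rw [Complex.norm_real, Real.norm_of_nonneg hzs.le]; exact hzsr)).summable
    exact this.tendsto_atTop_zero
  have htendC : Tendsto (fun n => (a n : ℂ) * (zs:ℂ)^n) atTop (𝓝 (-((c:ℂ)/zs))) := by
    have : Tendsto (fun n => -((c:ℂ)/zs) + p.coeff n * (zs:ℂ)^n) atTop
        (𝓝 (-((c:ℂ)/zs) + 0)) := tendsto_const_nhds.add htend0
    rw [add_zero] at this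
    exact this.congr (fun n => (hzc n).symm)
  constructor
  · have hre := (Complex.continuous_re.tendsto _).comp htendC
    have h2 : ((fun x : ℂ => x.re) ∘ fun n => (a n : ℂ) * (zs:ℂ)^n) =
        fun n => a n * zs ^ n := by
      funext n
      show ((a n : ℂ) * (zs:ℂ)^n).re = a n * zs ^ n
      rw [show ((a n : ℂ) * (zs:ℂ)^n) = ((a n * zs ^ n : ℝ) : ℂ) by push_cast; ring]
      exact Complex.ofReal_re _
    rw [h2] at hre
    have h4 : (-((c:ℂ)/zs)).re = -c / zs := by
      rw [show -((c:ℂ)/zs) = ((-c/zs : ℝ) : ℂ) by push_cast; ring]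
      exact Complex.ofReal_re _
    rwa [h4] at hre
  · exact div_ne_zero (neg_ne_zero.mpr hc) hzs.ne'
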